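/- (Proposition 1, stability condition form) Let η > 0, δ > 0, γ ≥ 0, t_k ∈ ℝ, x_z^k ∈ ℝ, and let (v_i)_{i≥0} be a sequence of reals with |v_i| ≤ γ for all i. Define the piecewise-linear ZMP trajectory x_z(t) = x_z^k + Σ_{i=0}^∞ (ρ(t − t_{k+i}) − ρ(t − t_{k+i+1})) v_i, where ρ(t) = max(t,0) and t_{k+i} = t_k + iδ. Then η ∫_{t_k}^∞ e^{−η(τ−t_k)} x_z(τ) dτ = x_z^k + ((1 − e^{−ηδ})/η) · Σ_{i=0}^∞ e^{−iηδ} v_i. -/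

import Mathlib

open MeasureTheory Real Set Filter Topology

private lemma tendsto_aux (η c d : ℝ) (hη : 0 < η) :
    Tendsto (fun τ : ℝ => -(Real.exp (-η*(τ - d)) * ((τ - c)/η + 1/η^2))) atTop (𝓝 0) := by
  have h1 : Tendsto (fun x : ℝ => x * Real.exp (-η * x)) atTop (𝓝 0) :=
    (tendsto_rpow_mul_exp_neg_mul_atTop_nhds_zero 1 η hη).congr fun x => by rw [Real.rpow_one]
  have h2 : Tendsto (fun x : ℝ => Real.exp (-η * x)) atTop (𝓝 0) := by
    refine (Real.tendsto_exp_neg_atTop_nhds_zero.comp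
      (Filter.tendsto_id.const_mul_atTop hη)).congr fun x => by simp [neg_mul]
  have h3 := ((h1.const_mul (Real.exp (η*d)/η)).add
    (h2.const_mul (Real.exp (η*d)*(1/η^2 - c/η)))).neg
  simp only [mul_zero, add_zero, neg_zero] at h3
  refine h3.congr fun τ => ?_
  rw [show -η*(τ - d) = η*d + -η*τ from by ring, Real.exp_add]
  ring

private lemma exp_int (η a : ℝ) (hη : 0 < η) :
    IntegrableOn (fun τ : ℝ => Real.exp (-η*(τ - a))) (Set.Ioi a) ∧
    ∫ τ in Set.Ioi a, Real.exp (-η*(τ - a)) = 1/η := by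
  have hderiv : ∀ x ∈ Set.Ici a, HasDerivAt (fun τ : ℝ => -(Real.exp (-η*(τ - a)))/η)
      (Real.exp (-η*(x - a))) x := by
    intro x _
    have hg : HasDerivAt (fun τ : ℝ => -η*(τ - a)) (-η) x := by
      simpa using ((hasDerivAt_id x).sub_const a).const_mul (-η)
    have := (hg.exp.neg).div_const η
    exact this.congr_deriv (by field_simp)
  have hpos : ∀ x ∈ Set.Ioi a, (0:ℝ) ≤ Real.exp (-η*(x - a)) := fun x _ => (Real.exp_pos _).le
  have htend : Tendsto (fun τ : ℝ => -(Real.exp (-η*(τ - a)))/η) atTop (𝓝 0) := by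
    have h2 : Tendsto (fun x : ℝ => Real.exp (-η * x)) atTop (𝓝 0) :=
      (Real.tendsto_exp_neg_atTop_nhds_zero.comp
        (Filter.tendsto_id.const_mul_atTop hη)).congr fun x => by simp [neg_mul]
    have := ((h2.const_mul (Real.exp (η*a))).neg.div_const η)
    simp only [mul_zero, neg_zero, zero_div] at this
    refine this.congr fun τ => ?_
    rw [show -η*(τ - a) = η*a + -η*τ from by ring, Real.exp_add]
  constructor
  · exact integrableOn_Ioi_deriv_of_nonneg' hderiv hpos htend
  · rw [integral_Ioi_of_hasDerivAt_of_nonneg' hderiv hpos htend]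
    simp
    field_simp

private lemma ramp_int (η tk c : ℝ) (hη : 0 < η) (hc : tk ≤ c) :
    IntegrableOn (fun τ : ℝ => Real.exp (-η*(τ - tk)) * max (τ - c) 0) (Set.Ioi tk) ∧
    ∫ τ in Set.Ioi tk, Real.exp (-η*(τ - tk)) * max (τ - c) 0
      = Real.exp (-η*(c - tk))/η^2 := by
  have hderiv : ∀ x ∈ Set.Ici c,
      HasDerivAt (fun τ : ℝ => -(Real.exp (-η*(τ - tk)) * ((τ - c)/η + 1/η^2)))
        (Real.exp (-η*(x - tk)) * (x - c)) x := by
    intro x _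
    have hg : HasDerivAt (fun τ : ℝ => -η*(τ - tk)) (-η) x := by
      simpa using ((hasDerivAt_id x).sub_const tk).const_mul (-η)
    have hh : HasDerivAt (fun τ : ℝ => (τ - c)/η + 1/η^2) (1/η) x := by
      exact (((hasDerivAt_id x).sub_const c).div_const η).add_const (1/η^2)
    have := (hg.exp.mul hh).neg
    exact this.congr_deriv (by field_simp; ring)
  have hpos : ∀ x ∈ Set.Ioi c, (0:ℝ) ≤ Real.exp (-η*(x - tk)) * (x - c) := by
    intro x hx
    exact mul_nonneg (Real.exp_pos _).le (by simp at hx; linarith)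
  have htend := tendsto_aux η c tk hη
  have hint : IntegrableOn (fun τ : ℝ => Real.exp (-η*(τ - tk)) * (τ - c)) (Set.Ioi c) :=
    integrableOn_Ioi_deriv_of_nonneg' hderiv hpos htend
  have hval : ∫ τ in Set.Ioi c, Real.exp (-η*(τ - tk)) * (τ - c)
      = Real.exp (-η*(c - tk))/η^2 := by
    rw [integral_Ioi_of_hasDerivAt_of_nonneg' hderiv hpos htend]
    field_simp
    ring
  have heq1 : Set.EqOn (fun τ : ℝ => Real.exp (-η*(τ - tk)) * max (τ - c) 0)
      (fun τ : ℝ => Real.exp (-η*(τ - tk)) * (τ - c)) (Set.Ioi c) := by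
    intro x hx
    simp only
    rw [max_eq_left (by simp at hx; linarith)]
  have heq0 : Set.EqOn (fun τ : ℝ => Real.exp (-η*(τ - tk)) * max (τ - c) 0)
      (fun _ : ℝ => (0:ℝ)) (Set.Ioc tk c) := by
    intro x hx
    simp only
    rw [max_eq_right (by simp at hx; linarith)]
    ring
  have hintIoi : IntegrableOn (fun τ : ℝ => Real.exp (-η*(τ - tk)) * max (τ - c) 0)
      (Set.Ioi c) := (integrableOn_congr_fun heq1 measurableSet_Ioi).mpr hint
  have hintIoc : IntegrableOn (fun τ : ℝ => Real.exp (-η*(τ - tk)) * max (τ - c) 0)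
      (Set.Ioc tk c) := (integrableOn_congr_fun heq0 measurableSet_Ioc).mpr (integrableOn_zero)
  have hsplit := Set.Ioc_union_Ioi_eq_Ioi hc
  constructor
  · rw [← hsplit]; exact hintIoc.union hintIoi
  · rw [← hsplit, setIntegral_union (Set.Ioc_disjoint_Ioi le_rfl) measurableSet_Ioi hintIoc hintIoi,
      setIntegral_congr_fun measurableSet_Ioc heq0,
      setIntegral_congr_fun measurableSet_Ioi heq1]
    simpa using hval

/-- Proposition 1, stability condition form: for the piecewise-linear ZMP
trajectory `x_z(t) = x_z^k + Σ_{i=0}^∞ (ρ(t − t_{k+i}) − ρ(t − t_{k+i+1})) v_i` with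
`|v_i| ≤ γ`, it holds
`η ∫_{t_k}^∞ e^{−η(τ−t_k)} x_z(τ) dτ = x_z^k + ((1 − e^{−ηδ})/η) Σ_{i=0}^∞ e^{−iηδ} v_i`. -/
theorem stmt_7 (η δ γ tk xzk : ℝ) (hη : 0 < η) (hδ : 0 < δ) (hγ : 0 ≤ γ)
    (v : ℕ → ℝ) (hv : ∀ i, |v i| ≤ γ)
    (xz : ℝ → ℝ)
    (hxz : ∀ t, xz t = xzk + ∑' i : ℕ,
      (max (t - (tk + i * δ)) 0 - max (t - (tk + (i + 1) * δ)) 0) * v i) :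
    η * ∫ τ in Set.Ioi tk, Real.exp (-η * (τ - tk)) * xz τ
      = xzk + (1 - Real.exp (-η * δ)) / η * ∑' i : ℕ, Real.exp (-(i : ℝ) * η * δ) * v i := by
  have hη' : η ≠ 0 := hη.ne'
  set r := Real.exp (-η * δ) with hrdef
  have hr0 : 0 < r := Real.exp_pos _
  have hr1 : r < 1 := Real.exp_lt_one_iff.mpr (by nlinarith)
  set F : ℕ → ℝ → ℝ := fun i τ => Real.exp (-η*(τ - tk)) *
      ((max (τ - (tk + (i:ℝ) * δ)) 0 - max (τ - (tk + ((i:ℝ) + 1) * δ)) 0) * v i) with hF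
  have hA : ∀ i : ℕ,
      IntegrableOn (fun τ : ℝ => Real.exp (-η*(τ - tk)) * max (τ - (tk + (i:ℝ)*δ)) 0)
        (Set.Ioi tk) ∧
      ∫ τ in Set.Ioi tk, Real.exp (-η*(τ - tk)) * max (τ - (tk + (i:ℝ)*δ)) 0
        = Real.exp (-η*((tk + (i:ℝ)*δ) - tk))/η^2 :=
    fun i => ramp_int η tk _ hη (le_add_of_nonneg_right (by positivity))
  have hB : ∀ i : ℕ,
      IntegrableOn (fun τ : ℝ => Real.exp (-η*(τ - tk)) * max (τ - (tk + ((i:ℝ)+1)*δ)) 0)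
        (Set.Ioi tk) ∧
      ∫ τ in Set.Ioi tk, Real.exp (-η*(τ - tk)) * max (τ - (tk + ((i:ℝ)+1)*δ)) 0
        = Real.exp (-η*((tk + ((i:ℝ)+1)*δ) - tk))/η^2 :=
    fun i => ramp_int η tk _ hη (le_add_of_nonneg_right (by positivity))
  have hrpow : ∀ i : ℕ, Real.exp (-η*((tk + (i:ℝ)*δ) - tk)) = r ^ i := by
    intro i
    rw [hrdef, show -η*((tk + (i:ℝ)*δ) - tk) = (i:ℝ) * (-η*δ) from by ring,
      Real.exp_nat_mul, neg_mul]
  have hrpow' : ∀ i : ℕ, Real.exp (-η*((tk + ((i:ℝ)+1)*δ) - tk)) = r ^ (i+1) := by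
    intro i
    rw [hrdef, show -η*((tk + ((i:ℝ)+1)*δ) - tk) = ((i+1 : ℕ):ℝ) * (-η*δ) from by push_cast; ring,
      Real.exp_nat_mul, neg_mul]
  have key : ∀ (i : ℕ) (c : ℝ),
      ∫ τ in Set.Ioi tk, (Real.exp (-η*(τ - tk)) * max (τ - (tk + (i:ℝ)*δ)) 0
        - Real.exp (-η*(τ - tk)) * max (τ - (tk + ((i:ℝ)+1)*δ)) 0) * c
      = (r^i - r^(i+1))/η^2 * c := by
    intro i c
    rw [integral_mul_const, integral_sub (hA i).1 (hB i).1, (hA i).2, (hB i).2,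
      hrpow i, hrpow' i]
    ring
  have hFeq : ∀ i : ℕ, F i = fun τ => (Real.exp (-η*(τ - tk)) * max (τ - (tk + (i:ℝ)*δ)) 0
      - Real.exp (-η*(τ - tk)) * max (τ - (tk + ((i:ℝ)+1)*δ)) 0) * v i := by
    intro i; funext τ; simp only [hF]; ring
  have hFint : ∀ i, Integrable (F i) (volume.restrict (Set.Ioi tk)) := by
    intro i
    rw [hFeq i]
    exact ((hA i).1.sub (hB i).1).mul_const (v i)
  have hFval : ∀ i, ∫ τ in Set.Ioi tk, F i τ = (r^i - r^(i+1))/η^2 * v i := by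
    intro i; rw [hFeq i]; exact key i (v i)
  have hmax : ∀ (i : ℕ) (τ : ℝ),
      max (τ - (tk + ((i:ℝ)+1)*δ)) 0 ≤ max (τ - (tk + (i:ℝ)*δ)) 0 := by
    intro i τ
    exact max_le_max (by nlinarith) le_rfl
  have hFnorm : ∀ i, ∫ τ in Set.Ioi tk, ‖F i τ‖ = (r^i - r^(i+1))/η^2 * |v i| := by
    intro i
    have : (fun τ => ‖F i τ‖) = fun τ => (Real.exp (-η*(τ - tk)) * max (τ - (tk + (i:ℝ)*δ)) 0
        - Real.exp (-η*(τ - tk)) * max (τ - (tk + ((i:ℝ)+1)*δ)) 0) * |v i| := by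
      funext τ
      simp only [hF, Real.norm_eq_abs, abs_mul, abs_of_nonneg (Real.exp_pos (-η*(τ - tk))).le,
        abs_of_nonneg (sub_nonneg.mpr (hmax i τ))]
      ring
    rw [this]
    exact key i |v i|
  have hrr : ∀ i : ℕ, r^(i+1) ≤ r^i := fun i =>
    pow_le_pow_of_le_one hr0.le hr1.le (Nat.le_succ i)
  have hsumNorm : Summable (fun i => ∫ τ in Set.Ioi tk, ‖F i τ‖) := by
    refine Summable.of_nonneg_of_le (fun i => ?_) (fun i => ?_)
      ((summable_geometric_of_lt_one hr0.le hr1).mul_left (γ/η^2))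
    · rw [hFnorm i]
      apply mul_nonneg (div_nonneg (by linarith [hrr i]) (sq_nonneg η)) (abs_nonneg _)
    · rw [hFnorm i]
      calc (r^i - r^(i+1))/η^2 * |v i| ≤ r^i/η^2 * γ := by
            gcongr
            all_goals first | positivity | nlinarith [pow_pos hr0 (i+1), hv i]
        _ = γ/η^2 * r^i := by ring
  set G : ℕ → ℝ → ℝ := fun i => Nat.rec (motive := fun _ => ℝ → ℝ)
    (fun τ => Real.exp (-η*(τ - tk)) * xzk) (fun j _ => F j) i with hG
  have hGint : ∀ i, Integrable (G i) (volume.restrict (Set.Ioi tk)) := by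
    intro i
    cases i with
    | zero => exact (exp_int η tk hη).1.mul_const xzk
    | succ j => exact hFint j
  have hGnormSum : Summable (fun i => ∫ τ in Set.Ioi tk, ‖G i τ‖) := by
    rw [← summable_nat_add_iff 1]
    exact hsumNorm
  have hsumF : ∀ τ : ℝ, Summable (fun i => F i τ) := by
    intro τ
    obtain ⟨N, hN⟩ := exists_nat_ge ((τ - tk)/δ)
    apply summable_of_ne_finset_zero (s := Finset.range N)
    intro i hi
    have hiN : N ≤ i := by simpa [Finset.mem_range, not_lt] using hi
    have h1 : τ - (tk + (i:ℝ)*δ) ≤ 0 := by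
      have hNi : (τ - tk)/δ ≤ (i:ℝ) := hN.trans (by exact_mod_cast hiN)
      rw [div_le_iff₀ hδ] at hNi
      linarith
    have h2 : τ - (tk + ((i:ℝ)+1)*δ) ≤ 0 := by nlinarith
    simp [hF, max_eq_right h1, max_eq_right h2]
  have hGsum : ∀ τ : ℝ, Summable (fun i => G i τ) := fun τ =>
    (summable_nat_add_iff 1).mp (hsumF τ)
  have hptwise : ∀ τ : ℝ, Real.exp (-η*(τ - tk)) * xz τ = ∑' i, G i τ := by
    intro τ
    rw [Summable.tsum_eq_zero_add (hGsum τ), hxz τ, mul_add, ← tsum_mul_left]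
    rfl
  have hIeq : ∫ τ in Set.Ioi tk, Real.exp (-η*(τ - tk)) * xz τ
      = ∑' i, ∫ τ in Set.Ioi tk, G i τ := by
    rw [integral_congr_ae (Filter.Eventually.of_forall fun τ => hptwise τ)]
    exact (integral_tsum_of_summable_integral_norm hGint hGnormSum).symm
  have hGintsum : Summable (fun i => ∫ τ in Set.Ioi tk, G i τ) :=
    Summable.of_norm_bounded hGnormSum (fun i => norm_integral_le_integral_norm _)
  have h0 : ∫ τ in Set.Ioi tk, G 0 τ = 1/η * xzk := by
    show ∫ τ in Set.Ioi tk, Real.exp (-η*(τ - tk)) * xzk = 1/η * xzk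
    rw [integral_mul_const, (exp_int η tk hη).2]
  have hexpi : ∀ i : ℕ, Real.exp (-(i:ℝ) * η * δ) = r ^ i := by
    intro i
    rw [hrdef, show -(i:ℝ) * η * δ = (i:ℝ) * (-η*δ) from by ring, Real.exp_nat_mul, neg_mul]
  have hs : ∀ i : ℕ, ∫ τ in Set.Ioi tk, G (i+1) τ
      = (1 - r)/η^2 * (Real.exp (-(i:ℝ) * η * δ) * v i) := by
    intro i
    rw [show (∫ τ in Set.Ioi tk, G (i+1) τ) = ∫ τ in Set.Ioi tk, F i τ from rfl, hFval i,
      hexpi i]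
    ring
  have hconv : (∫ τ in Set.Ioi tk, Real.exp (-η * (τ - tk)) * xz τ)
      = 1/η * xzk + (1 - r)/η^2 * ∑' i : ℕ, Real.exp (-(i:ℝ) * η * δ) * v i := by
    rw [hIeq, Summable.tsum_eq_zero_add hGintsum, h0, tsum_congr hs, tsum_mul_left]
  rw [hconv]
  field_simp
  ring_nf
  simp only [mul_right_comm η _ δ]
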